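/- arXiv:cs/0502092 — 4 statements merged into one kernel-verified Lean document; each statement's English description precedes it below -/
import Mathlib

section
/- Let φ₀(x) = max(0, 1 − |x|), φ₁(x) = ∫_{x−1}^{x} φ₀(t) dt, and define the spline wavelets ψ₀(x) = 2·( −(1/8)φ₀(2x + 1) − (1/4)φ₀(2x) + (3/4)φ₀(2x − 1) − (1/4)φ₀(2x − 2) − (1/8)φ₀(2x − 3) ) and ψ₁(x) = 2·( −(1/4)φ₁(2x + 1) − (3/4)φ₁(2x) + (3/4)φ₁(2x − 1) + (1/4)φ₁(2x − 2) ). Then ψ₁ is differentiable at every point of ℝ and ψ₁′(x) = 4·ψ₀(x) for all x ∈ ℝ. -/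
/-- The hat function (piecewise-linear B-spline of degree 1). -/
noncomputable def phi0 (x : ℝ) : ℝ := max 0 (1 - |x|)

/-- The quadratic B-spline. -/
noncomputable def phi1 (x : ℝ) : ℝ := ∫ t in (x - 1)..x, phi0 t

/-- The shortest-support biorthogonal spline wavelet of degree 1. -/
noncomputable def psi0 (x : ℝ) : ℝ :=
  2 * (-(1 / 8) * phi0 (2 * x + 1) - (1 / 4) * phi0 (2 * x)
    + (3 / 4) * phi0 (2 * x - 1) - (1 / 4) * phi0 (2 * x - 2)
    - (1 / 8) * phi0 (2 * x - 3))

/-- The shortest-support biorthogonal spline wavelet of degree 2. -/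
noncomputable def psi1 (x : ℝ) : ℝ :=
  2 * (-(1 / 4) * phi1 (2 * x + 1) - (3 / 4) * phi1 (2 * x)
    + (3 / 4) * phi1 (2 * x - 1) + (1 / 4) * phi1 (2 * x - 2))

lemma phi0_continuous : Continuous phi0 := by
  unfold phi0; fun_prop

lemma phi0_intInt (a b : ℝ) : IntervalIntegrable phi0 MeasureTheory.volume a b :=
  phi0_continuous.intervalIntegrable a b

lemma phi1_eq (y : ℝ) :
    phi1 y = (∫ t in (0:ℝ)..y, phi0 t) - ∫ t in (0:ℝ)..(y - 1), phi0 t := by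
  rw [eq_sub_iff_add_eq, add_comm]
  exact intervalIntegral.integral_add_adjacent_intervals (phi0_intInt _ _) (phi0_intInt _ _)

lemma F_hasDerivAt (x : ℝ) :
    HasDerivAt (fun y => ∫ t in (0:ℝ)..y, phi0 t) (phi0 x) x :=
  intervalIntegral.integral_hasDerivAt_right (phi0_intInt _ _)
    (phi0_continuous.stronglyMeasurable.stronglyMeasurableAtFilter)
    phi0_continuous.continuousAt

lemma phi1_hasDerivAt (x : ℝ) :
    HasDerivAt phi1 (phi0 x - phi0 (x - 1)) x := by
  have h1 := F_hasDerivAt x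
  have h2 : HasDerivAt (fun y : ℝ => ∫ t in (0:ℝ)..(y - 1), phi0 t) (phi0 (x - 1)) x := by
    have := (F_hasDerivAt (x - 1)).comp x ((hasDerivAt_id x).sub_const 1)
    simpa [Function.comp_def] using this
  have h := h1.sub h2
  exact h.congr_of_eventuallyEq (Filter.Eventually.of_forall fun y => phi1_eq y)

theorem psi1_hasDerivAt :
    ∀ x : ℝ, HasDerivAt psi1 (4 * psi0 x) x := by
  intro x
  have d : ∀ c : ℝ, HasDerivAt (fun y : ℝ => phi1 (2 * y + c))
      (2 * (phi0 (2 * x + c) - phi0 (2 * x + c - 1))) x := by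
    intro c
    have hin : HasDerivAt (fun y : ℝ => 2 * y + c) 2 x := by
      simpa using ((hasDerivAt_id x).const_mul 2).add_const c
    have := (phi1_hasDerivAt (2 * x + c)).comp x hin
    simpa [mul_comm, Function.comp_def] using this
  have h1 := d 1
  have h2 := d 0
  have h3 := d (-1)
  have h4 := d (-2)
  simp only [add_zero] at h2
  have h := ((((h1.const_mul (-(1/4))).sub (h2.const_mul (3/4))).add
      (h3.const_mul (3/4))).add (h4.const_mul (1/4))).const_mul 2
  have heq : (fun y => 2 * ((-(1/4) * phi1 (2 * y + 1) - 3/4 * phi1 (2 * y))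
      + 3/4 * phi1 (2 * y + -1) + 1/4 * phi1 (2 * y + -2))) = psi1 := by
    funext y
    unfold psi1
    ring_nf
  simp only [Pi.add_apply, Pi.sub_apply] at h
  rw [heq] at h
  refine h.congr_deriv ?_
  unfold psi0
  have e1 : (2:ℝ) * x + 1 - 1 = 2 * x := by ring
  have e2 : (2:ℝ) * x - 1 = 2 * x + -1 := by ring
  have e3 : (2:ℝ) * x + -1 - 1 = 2 * x - 2 := by ring
  have e4 : (2:ℝ) * x - 2 = 2 * x + -2 := by ring
  have e5 : (2:ℝ) * x + -2 - 1 = 2 * x - 3 := by ring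
  rw [e1, e2, e3, e4, e5]
  ring
end

section
/- Let φ₀, ψ₀ : ℝ → ℝ be functions, and let φ₁, ψ₁ : ℝ → ℝ be differentiable with φ₁′(x) = φ₀(x) − φ₀(x − 1) and ψ₁′(x) = 4ψ₀(x) for all x. Then the three vector fields on ℝ² defined by Ψ_div^{(1,0)}(x₁,x₂) = ( −(1/4)ψ₁(x₁)(φ₀(x₂) − φ₀(x₂−1)), ψ₀(x₁)φ₁(x₂) ), Ψ_div^{(0,1)}(x₁,x₂) = ( φ₁(x₁)ψ₀(x₂), −(1/4)(φ₀(x₁) − φ₀(x₁−1))ψ₁(x₂) ), and Ψ_div^{(1,1)}(x₁,x₂) = ( ψ₁(x₁)ψ₀(x₂), −ψ₀(x₁)ψ₁(x₂) ) each have zero divergence at every point of ℝ². -/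
/-- The three generating isotropic 2D divergence-free wavelets
`Ψ_div^{(1,0)}`, `Ψ_div^{(0,1)}`, `Ψ_div^{(1,1)}` have zero divergence
`∂₁F¹ + ∂₂F² = 0` at every point of `ℝ²`. -/
theorem isotropic_2D_divfree_wavelets (φ₀ φ₁ ψ₀ ψ₁ : ℝ → ℝ)
    (hφ₁ : ∀ x : ℝ, HasDerivAt φ₁ (φ₀ x - φ₀ (x - 1)) x)
    (hψ₁ : ∀ x : ℝ, HasDerivAt ψ₁ (4 * ψ₀ x) x) :
    ∀ x₁ x₂ : ℝ,
      (deriv (fun t => -(1 / 4) * ψ₁ t * (φ₀ x₂ - φ₀ (x₂ - 1))) x₁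
          + deriv (fun t => ψ₀ x₁ * φ₁ t) x₂ = 0)
      ∧ (deriv (fun t => φ₁ t * ψ₀ x₂) x₁
          + deriv (fun t => -(1 / 4) * (φ₀ x₁ - φ₀ (x₁ - 1)) * ψ₁ t) x₂ = 0)
      ∧ (deriv (fun t => ψ₁ t * ψ₀ x₂) x₁
          + deriv (fun t => -(ψ₀ x₁ * ψ₁ t)) x₂ = 0) := by
  intro x₁ x₂
  have d1 : deriv (fun t => -(1 / 4) * ψ₁ t * (φ₀ x₂ - φ₀ (x₂ - 1))) x₁
      = -(1 / 4) * (4 * ψ₀ x₁) * (φ₀ x₂ - φ₀ (x₂ - 1)) :=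
    (((hψ₁ x₁).const_mul (-(1 / 4))).mul_const _).deriv
  have d2 : deriv (fun t => ψ₀ x₁ * φ₁ t) x₂ = ψ₀ x₁ * (φ₀ x₂ - φ₀ (x₂ - 1)) :=
    ((hφ₁ x₂).const_mul (ψ₀ x₁)).deriv
  have d3 : deriv (fun t => φ₁ t * ψ₀ x₂) x₁ = (φ₀ x₁ - φ₀ (x₁ - 1)) * ψ₀ x₂ :=
    ((hφ₁ x₁).mul_const _).deriv
  have d4 : deriv (fun t => -(1 / 4) * (φ₀ x₁ - φ₀ (x₁ - 1)) * ψ₁ t) x₂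
      = -(1 / 4) * (φ₀ x₁ - φ₀ (x₁ - 1)) * (4 * ψ₀ x₂) :=
    ((hψ₁ x₂).const_mul _).deriv
  have d5 : deriv (fun t => ψ₁ t * ψ₀ x₂) x₁ = (4 * ψ₀ x₁) * ψ₀ x₂ :=
    ((hψ₁ x₁).mul_const _).deriv
  have d6 : deriv (fun t => -(ψ₀ x₁ * ψ₁ t)) x₂ = -(ψ₀ x₁ * (4 * ψ₀ x₂)) :=
    (((hψ₁ x₂).const_mul (ψ₀ x₁)).neg).deriv
  refine ⟨by rw [d1, d2]; ring, by rw [d3, d4]; ring, by rw [d5, d6]; ring⟩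
end

section
/- Let φ₀, ψ₀ : ℝ → ℝ be functions, and let φ₁, ψ₁ : ℝ → ℝ be differentiable with φ₁′(x) = φ₀(x) − φ₀(x − 1) and ψ₁′(x) = 4ψ₀(x) for all x. Then the three vector fields on ℝ³ defined by Ψ_{div,1}^{(1,0,0)}(x) = ( −(1/4)ψ₁(x₁)(φ₀(x₂) − φ₀(x₂−1))φ₀(x₃), ψ₀(x₁)φ₁(x₂)φ₀(x₃), 0 ), Ψ_{div,2}^{(1,1,0)}(x) = ( −(1/8)ψ₁(x₁)ψ₀(x₂)(φ₀(x₃) − φ₀(x₃−1)), −(1/8)ψ₀(x₁)ψ₁(x₂)(φ₀(x₃) − φ₀(x₃−1)), ψ₀(x₁)ψ₀(x₂)φ₁(x₃) ), and Ψ_{div,1}^{(1,1,1)}(x) = ( −ψ₁(x₁)ψ₀(x₂)ψ₀(x₃), 0, ψ₀(x₁)ψ₀(x₂)ψ₁(x₃) ) each have zero divergence at every point of ℝ³. -/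
/-- Three generating isotropic 3D divergence-free wavelets
(`Ψ_{div,1}^{(1,0,0)}`, `Ψ_{div,2}^{(1,1,0)}` and `Ψ_{div,1}^{(1,1,1)}`) have zero
divergence `∂₁F¹ + ∂₂F² + ∂₃F³ = 0` at every point of `ℝ³`. -/
theorem isotropic_3D_divfree_wavelets (φ₀ φ₁ ψ₀ ψ₁ : ℝ → ℝ)
    (hφ₁ : ∀ x : ℝ, HasDerivAt φ₁ (φ₀ x - φ₀ (x - 1)) x)
    (hψ₁ : ∀ x : ℝ, HasDerivAt ψ₁ (4 * ψ₀ x) x) :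
    ∀ x₁ x₂ x₃ : ℝ,
      (deriv (fun t => -(1 / 4) * ψ₁ t * (φ₀ x₂ - φ₀ (x₂ - 1)) * φ₀ x₃) x₁
          + deriv (fun t => ψ₀ x₁ * φ₁ t * φ₀ x₃) x₂
          + deriv (fun _ : ℝ => (0 : ℝ)) x₃ = 0)
      ∧ (deriv (fun t => -(1 / 8) * ψ₁ t * ψ₀ x₂ * (φ₀ x₃ - φ₀ (x₃ - 1))) x₁
          + deriv (fun t => -(1 / 8) * ψ₀ x₁ * ψ₁ t * (φ₀ x₃ - φ₀ (x₃ - 1))) x₂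
          + deriv (fun t => ψ₀ x₁ * ψ₀ x₂ * φ₁ t) x₃ = 0)
      ∧ (deriv (fun t => -(ψ₁ t * ψ₀ x₂ * ψ₀ x₃)) x₁
          + deriv (fun _ : ℝ => (0 : ℝ)) x₂
          + deriv (fun t => ψ₀ x₁ * ψ₀ x₂ * ψ₁ t) x₃ = 0) := by
  intro x₁ x₂ x₃
  have d1 : deriv (fun t => -(1 / 4) * ψ₁ t * (φ₀ x₂ - φ₀ (x₂ - 1)) * φ₀ x₃) x₁
      = -(1 / 4) * (4 * ψ₀ x₁) * (φ₀ x₂ - φ₀ (x₂ - 1)) * φ₀ x₃ :=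
    ((((hψ₁ x₁).const_mul (-(1 / 4))).mul_const _).mul_const _).deriv
  have d2 : deriv (fun t => ψ₀ x₁ * φ₁ t * φ₀ x₃) x₂
      = ψ₀ x₁ * (φ₀ x₂ - φ₀ (x₂ - 1)) * φ₀ x₃ :=
    (((hφ₁ x₂).const_mul (ψ₀ x₁)).mul_const _).deriv
  have d3 : deriv (fun t => -(1 / 8) * ψ₁ t * ψ₀ x₂ * (φ₀ x₃ - φ₀ (x₃ - 1))) x₁
      = -(1 / 8) * (4 * ψ₀ x₁) * ψ₀ x₂ * (φ₀ x₃ - φ₀ (x₃ - 1)) :=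
    ((((hψ₁ x₁).const_mul (-(1 / 8))).mul_const _).mul_const _).deriv
  have d4 : deriv (fun t => -(1 / 8) * ψ₀ x₁ * ψ₁ t * (φ₀ x₃ - φ₀ (x₃ - 1))) x₂
      = -(1 / 8) * ψ₀ x₁ * (4 * ψ₀ x₂) * (φ₀ x₃ - φ₀ (x₃ - 1)) :=
    (((hψ₁ x₂).const_mul (-(1 / 8) * ψ₀ x₁)).mul_const _).deriv
  have d5 : deriv (fun t => ψ₀ x₁ * ψ₀ x₂ * φ₁ t) x₃
      = ψ₀ x₁ * ψ₀ x₂ * (φ₀ x₃ - φ₀ (x₃ - 1)) :=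
    ((hφ₁ x₃).const_mul (ψ₀ x₁ * ψ₀ x₂)).deriv
  have d6 : deriv (fun t => -(ψ₁ t * ψ₀ x₂ * ψ₀ x₃)) x₁
      = -((4 * ψ₀ x₁) * ψ₀ x₂ * ψ₀ x₃) :=
    (((hψ₁ x₁).mul_const _).mul_const _).neg.deriv
  have d7 : deriv (fun t => ψ₀ x₁ * ψ₀ x₂ * ψ₁ t) x₃
      = ψ₀ x₁ * ψ₀ x₂ * (4 * ψ₀ x₃) :=
    ((hψ₁ x₃).const_mul (ψ₀ x₁ * ψ₀ x₂)).deriv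
  refine ⟨?_, ?_, ?_⟩ <;> simp only [d1, d2, d3, d4, d5, d6, d7, deriv_const'] <;> ring
end

section
/- Let f : ℝ → ℝ be four times continuously differentiable with |f⁗(t)| ≤ M for all t ∈ ℝ, let N ≥ 1 be an integer, and for each m ∈ ℤ define the quasi-interpolation coefficient c̃_m = (5/8)( f(m/N) + f((m+1)/N) ) − (1/8)( f((m−1)/N) + f((m+2)/N) ). Then for every ℓ ∈ ℤ, | (1/2)(c̃_{ℓ−1} + c̃_ℓ) − f(ℓ/N) | ≤ (5/48)·M·N^{−4}. -/
open Set

private lemma myIterWithin {f : ℝ → ℝ} (hf : ContDiff ℝ 4 f) {s : Set ℝ}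
    (hs : UniqueDiffOn ℝ s) {x : ℝ} (hx : x ∈ s) (k : ℕ) (hk : (k : ℕ∞) ≤ 4) :
    iteratedDerivWithin k f s x = iteratedDeriv k f x := by
  have H : HasFTaylorSeriesUpToOn 4 f (ftaylorSeriesWithin ℝ f Set.univ) s :=
    ((hf.contDiffOn).ftaylorSeriesWithin uniqueDiffOn_univ).mono (Set.subset_univ s)
  have h2 := H.eq_iteratedFDerivWithin_of_uniqueDiffOn (by exact_mod_cast hk) hs hx
  rw [iteratedDerivWithin_eq_iteratedFDerivWithin, iteratedDeriv_eq_iteratedFDeriv, ← h2]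
  simp [ftaylorSeriesWithin, iteratedFDerivWithin_univ]

private lemma taylor4_pos (f : ℝ → ℝ) (M : ℝ) (hf : ContDiff ℝ 4 f)
    (hM : ∀ t : ℝ, |iteratedDeriv 4 f t| ≤ M) (x s : ℝ) (hs : 0 ≤ s) :
    |f (x + s) - (f x + s * iteratedDeriv 1 f x + s ^ 2 / 2 * iteratedDeriv 2 f x
      + s ^ 3 / 6 * iteratedDeriv 3 f x)| ≤ M * s ^ 4 / 24 := by
  rcases eq_or_lt_of_le hs with rfl | hs
  · simp
  have hxx : x < x + s := by linarith
  have hIcc : UniqueDiffOn ℝ (Icc x (x + s)) := uniqueDiffOn_Icc hxx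
  have hfO : ContDiffOn ℝ 3 f (Icc x (x + s)) := (hf.of_le (by norm_num)).contDiffOn
  have hdiff : DifferentiableOn ℝ (iteratedDerivWithin 3 f (Icc x (x + s))) (Ioo x (x + s)) := by
    refine DifferentiableOn.congr
      ((hf.differentiable_iteratedDeriv 3 (by norm_num)).differentiableOn) ?_
    intro y hy
    exact myIterWithin hf hIcc (Ioo_subset_Icc_self hy) 3 (by norm_num)
  obtain ⟨x', hx', heq⟩ := taylor_mean_remainder_lagrange (n := 3) hxx.ne
    (by rwa [uIcc_of_le hxx.le]) (by rwa [uIcc_of_le hxx.le, uIoo_of_le hxx.le])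
  rw [uIcc_of_le hxx.le] at heq
  rw [uIoo_of_le hxx.le] at hx'
  have hT : taylorWithinEval f 3 (Icc x (x + s)) x (x + s)
      = f x + s * iteratedDeriv 1 f x + s ^ 2 / 2 * iteratedDeriv 2 f x
        + s ^ 3 / 6 * iteratedDeriv 3 f x := by
    rw [taylor_within_apply]
    have h0 := myIterWithin hf hIcc (left_mem_Icc.2 hxx.le) 0 (by norm_num)
    have h1 := myIterWithin hf hIcc (left_mem_Icc.2 hxx.le) 1 (by norm_num)
    have h2 := myIterWithin hf hIcc (left_mem_Icc.2 hxx.le) 2 (by norm_num)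
    have h3 := myIterWithin hf hIcc (left_mem_Icc.2 hxx.le) 3 (by norm_num)
    simp [Finset.sum_range_succ, h0, h1, h2, h3, iteratedDeriv_zero, Nat.factorial]
    ring
  have h4 : iteratedDerivWithin 4 f (Icc x (x + s)) x' = iteratedDeriv 4 f x' :=
    myIterWithin hf hIcc (Ioo_subset_Icc_self hx') 4 (by norm_num)
  rw [hT] at heq
  have hfac : (((3 + 1 : ℕ).factorial : ℝ)) = 24 := by norm_num [Nat.factorial]
  have hxs : x + s - x = s := by ring
  rw [heq, h4, hfac, hxs]
  have habs : |iteratedDeriv 4 f x' * s ^ (3 + 1) / 24|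
      = |iteratedDeriv 4 f x'| * s ^ 4 / 24 := by
    rw [abs_div, abs_mul, abs_of_nonneg (show (0:ℝ) ≤ s ^ (3 + 1) by positivity)]
    norm_num
  rw [habs]
  have hs4 : (0:ℝ) ≤ s ^ 4 := by positivity
  nlinarith [hM x', abs_nonneg (iteratedDeriv 4 f x')]

private lemma taylor4 (f : ℝ → ℝ) (M : ℝ) (hf : ContDiff ℝ 4 f)
    (hM : ∀ t : ℝ, |iteratedDeriv 4 f t| ≤ M) (x s : ℝ) :
    |f (x + s) - (f x + s * iteratedDeriv 1 f x + s ^ 2 / 2 * iteratedDeriv 2 f x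
      + s ^ 3 / 6 * iteratedDeriv 3 f x)| ≤ M * s ^ 4 / 24 := by
  rcases le_or_gt 0 s with hs | hs
  · exact taylor4_pos f M hf hM x s hs
  · set g : ℝ → ℝ := fun t => f (-t) with hg
    have hgc : ContDiff ℝ 4 g := hf.comp contDiff_neg
    have hgM : ∀ t : ℝ, |iteratedDeriv 4 g t| ≤ M := by
      intro t
      rw [hg, iteratedDeriv_comp_neg]
      norm_num
      exact hM (-t)
    have key := taylor4_pos g M hgc hgM (-x) (-s) (by linarith)
    have e1 : iteratedDeriv 1 g (-x) = -iteratedDeriv 1 f x := by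
      rw [hg, iteratedDeriv_comp_neg]; norm_num
    have e2 : iteratedDeriv 2 g (-x) = iteratedDeriv 2 f x := by
      rw [hg, iteratedDeriv_comp_neg]; norm_num
    have e3 : iteratedDeriv 3 g (-x) = -iteratedDeriv 3 f x := by
      rw [hg, iteratedDeriv_comp_neg]; norm_num
    have e0 : g (-x + -s) = f (x + s) := by
      show f (-(-x + -s)) = f (x + s)
      congr 1; ring
    have e0' : g (-x) = f x := by
      show f (-(-x)) = f x
      congr 1; ring
    rw [e0, e0', e1, e2, e3] at key
    have hre : f (x + s) - (f x + -s * -iteratedDeriv 1 f x + (-s) ^ 2 / 2 * iteratedDeriv 2 f x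
        + (-s) ^ 3 / 6 * -iteratedDeriv 3 f x)
      = f (x + s) - (f x + s * iteratedDeriv 1 f x + s ^ 2 / 2 * iteratedDeriv 2 f x
        + s ^ 3 / 6 * iteratedDeriv 3 f x) := by ring
    have h4 : M * (-s) ^ 4 / 24 = M * s ^ 4 / 24 := by ring
    rw [hre, h4] at key
    exact key

/-- Fourth-order accuracy at grid points of the quadratic-spline quasi-interpolation
with coefficients `c̃_m = (5/8)(f(m/N)+f((m+1)/N)) − (1/8)(f((m−1)/N)+f((m+2)/N))`. -/
theorem quasi_interpolation_error (f : ℝ → ℝ) (M : ℝ)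
    (hf : ContDiff ℝ 4 f)
    (hM : ∀ t : ℝ, |iteratedDeriv 4 f t| ≤ M)
    (N : ℕ) (hN : 1 ≤ N)
    (c : ℤ → ℝ)
    (hc : ∀ m : ℤ, c m =
      (5 / 8) * (f (m / N) + f ((m + 1) / N))
        - (1 / 8) * (f ((m - 1) / N) + f ((m + 2) / N))) :
    ∀ ℓ : ℤ,
      |(1 / 2) * (c (ℓ - 1) + c ℓ) - f (ℓ / N)|
        ≤ (5 / 48) * M / (N : ℝ) ^ 4 := by
  intro ℓ
  set x : ℝ := (ℓ : ℝ) / N with hx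
  set h : ℝ := 1 / (N : ℝ) with hh
  have A1 := taylor4 f M hf hM x h
  have A2 := taylor4 f M hf hM x (-h)
  have A3 := taylor4 f M hf hM x (2 * h)
  have A4 := taylor4 f M hf hM x (-(2 * h))
  have w1 : f (((ℓ - 1 : ℤ) : ℝ) / N) = f (x + -h) := by
    congr 1; rw [hx, hh]; push_cast; ring
  have w2 : f ((((ℓ - 1 : ℤ) : ℝ) + 1) / N) = f x := by
    congr 1; rw [hx]; push_cast; ring
  have w3 : f ((((ℓ - 1 : ℤ) : ℝ) - 1) / N) = f (x + -(2 * h)) := by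
    congr 1; rw [hx, hh]; push_cast; ring
  have w4 : f ((((ℓ - 1 : ℤ) : ℝ) + 2) / N) = f (x + h) := by
    congr 1; rw [hx, hh]; push_cast; ring
  have w5 : f (((ℓ : ℤ) : ℝ) / N) = f x := by rw [hx]
  have w6 : f ((((ℓ : ℤ) : ℝ) + 1) / N) = f (x + h) := by
    congr 1; rw [hx, hh]; ring
  have w7 : f ((((ℓ : ℤ) : ℝ) - 1) / N) = f (x + -h) := by
    congr 1; rw [hx, hh]; ring
  have w8 : f ((((ℓ : ℤ) : ℝ) + 2) / N) = f (x + 2 * h) := by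
    congr 1; rw [hx, hh]; ring
  have key : (1 / 2) * (c (ℓ - 1) + c ℓ) - f x
      = (1 / 4) * ((f (x + h) - (f x + h * iteratedDeriv 1 f x + h ^ 2 / 2 * iteratedDeriv 2 f x
            + h ^ 3 / 6 * iteratedDeriv 3 f x))
          + (f (x + -h) - (f x + (-h) * iteratedDeriv 1 f x + (-h) ^ 2 / 2 * iteratedDeriv 2 f x
            + (-h) ^ 3 / 6 * iteratedDeriv 3 f x)))
        - (1 / 16) * ((f (x + 2 * h) - (f x + (2 * h) * iteratedDeriv 1 f x
            + (2 * h) ^ 2 / 2 * iteratedDeriv 2 f x + (2 * h) ^ 3 / 6 * iteratedDeriv 3 f x))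
          + (f (x + -(2 * h)) - (f x + (-(2 * h)) * iteratedDeriv 1 f x
            + (-(2 * h)) ^ 2 / 2 * iteratedDeriv 2 f x
            + (-(2 * h)) ^ 3 / 6 * iteratedDeriv 3 f x))) := by
    rw [hc (ℓ - 1), hc ℓ, w1, w2, w3, w4, w5, w6, w7, w8]
    ring
  have hgoal : (5 : ℝ) / 48 * M / (N : ℝ) ^ 4 = 5 / 48 * (M * h ^ 4) := by
    rw [hh]; field_simp
  rw [key, hgoal]
  rw [abs_le] at A1 A2 A3 A4 ⊢
  constructor <;> linarith [A1.1, A1.2, A2.1, A2.2, A3.1, A3.2, A4.1, A4.2]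
end
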